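/- arXiv:2107.09057 — 2 statements merged into one kernel-verified Lean document; each statement's English description precedes it below -/
import Mathlib

section
/- Quantum Donoho-Stark uncertainty principle, commutative finite-dimensional case: if k > 0 and F is a k-transform, then for every nonzero x : Fin n → ℂ one has S_d(x) * S_τ(F x) ≥ k. -/
open Finset

/-- Weighted `p`-norm on `Fin n → ℂ` with weight `d`. -/
noncomputable def wnorm {n : ℕ} (d : Fin n → ℝ) (p : ℝ) (x : Fin n → ℂ) : ℝ :=
  (∑ i, d i * ‖x i‖ ^ p) ^ (1 / p)

/-- Sup (infinity) norm on `Fin n → ℂ`. -/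
noncomputable def inorm {n : ℕ} (x : Fin n → ℂ) : ℝ :=
  ⨆ i, ‖x i‖

/-- `G` is the adjoint of `F` with respect to the weighted inner products with
weights `d` and `τ`. -/
def IsAdjointPair {n m : ℕ} (d : Fin n → ℝ) (τ : Fin m → ℝ)
    (F : (Fin n → ℂ) →ₗ[ℂ] (Fin m → ℂ)) (G : (Fin m → ℂ) →ₗ[ℂ] (Fin n → ℂ)) : Prop :=
  ∀ (x : Fin n → ℂ) (u : Fin m → ℂ),
    ∑ j, (τ j : ℂ) * (starRingEnd ℂ) (F x j) * u j
      = ∑ i, (d i : ℂ) * (starRingEnd ℂ) (x i) * G u i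

/-- Weighted support of `x`: sum of the weights over the set where `x` is nonzero. -/
noncomputable def wsupp {n : ℕ} (d : Fin n → ℝ) (x : Fin n → ℂ) : ℝ :=
  ∑ i, if x i = 0 then 0 else d i

lemma wnorm_one {n : ℕ} (d : Fin n → ℝ) (x : Fin n → ℂ) :
    wnorm d 1 x = ∑ i, d i * ‖x i‖ := by
  simp [wnorm, Real.rpow_one]

lemma abs_le_inorm {n : ℕ} (x : Fin n → ℂ) (i : Fin n) :
    ‖x i‖ ≤ inorm x :=
  by unfold inorm; exact le_ciSup (Set.Finite.bddAbove (Set.finite_range fun j => ‖x j‖)) i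

lemma inorm_nonneg {n : ℕ} (x : Fin n → ℂ) : 0 ≤ inorm x :=
  Real.iSup_nonneg fun i => norm_nonneg _

lemma sum_abs_le {n : ℕ} (d : Fin n → ℝ) (hd : ∀ i, 0 < d i) (x : Fin n → ℂ) :
    ∑ i, d i * ‖x i‖ ≤ wsupp d x * inorm x := by
  rw [wsupp, Finset.sum_mul]
  apply Finset.sum_le_sum
  intro i _
  by_cases h : x i = 0
  · simp [h]
  · simp only [if_neg h]
    exact mul_le_mul_of_nonneg_left (abs_le_inorm x i) (hd i).le

lemma wnorm_single {n : ℕ} (d : Fin n → ℝ) (i : Fin n) :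
    wnorm d 1 (Pi.single i 1) = d i := by
  rw [wnorm_one, Finset.sum_eq_single i]
  · simp
  · intro j _ hj
    simp [Pi.single_eq_of_ne hj]
  · simp

lemma wsupp_nonneg {n : ℕ} (d : Fin n → ℝ) (hd : ∀ i, 0 < d i) (x : Fin n → ℂ) :
    0 ≤ wsupp d x := by
  refine Finset.sum_nonneg fun i _ => ?_
  split <;> simp [le_of_lt, hd i]

lemma inorm_G_le {n m : ℕ} (d : Fin n → ℝ) (τ : Fin m → ℝ)
    (hd : ∀ i, 0 < d i) (hτ : ∀ j, 0 < τ j)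
    (F : (Fin n → ℂ) →ₗ[ℂ] (Fin m → ℂ)) (G : (Fin m → ℂ) →ₗ[ℂ] (Fin n → ℂ))
    (hadj : ∀ (x : Fin n → ℂ) (u : Fin m → ℂ),
      ∑ j, (τ j : ℂ) * (starRingEnd ℂ) (F x j) * u j
        = ∑ i, (d i : ℂ) * (starRingEnd ℂ) (x i) * G u i)
    (hF1 : ∀ x, inorm (F x) ≤ wnorm d 1 x)
    (u : Fin m → ℂ) :
    inorm (G u) ≤ ∑ j, τ j * ‖u j‖ := by
  have hsum : 0 ≤ ∑ j, τ j * ‖u j‖ :=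
    Finset.sum_nonneg fun j _ => mul_nonneg (hτ j).le (norm_nonneg _)
  refine Real.iSup_le (fun i => ?_) hsum
  have key := hadj (Pi.single i 1) u
  rw [Finset.sum_eq_single i (fun j _ hj => by simp [Pi.single_eq_of_ne hj])
    (by simp)] at key
  simp only [Pi.single_eq_same, map_one, mul_one] at key
  have hdi : (d i : ℂ) ≠ 0 := by exact_mod_cast (hd i).ne'
  have hGi : G u i = (d i : ℂ)⁻¹ * ∑ j, (τ j : ℂ) * (starRingEnd ℂ) (F (Pi.single i 1) j) * u j := by
    rw [key]; field_simp
  have hSabs : ‖∑ j, (τ j : ℂ) * (starRingEnd ℂ) (F (Pi.single i 1) j) * u j‖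
      ≤ ∑ j, τ j * (‖F (Pi.single i 1) j‖ * ‖u j‖) := by
    refine (norm_sum_le Finset.univ _).trans (le_of_eq ?_)
    refine Finset.sum_congr rfl fun j _ => ?_
    rw [norm_mul, norm_mul, Complex.norm_conj, Complex.norm_real, Real.norm_eq_abs,
      abs_of_pos (hτ j), mul_assoc]
  have habs : ‖G u i‖
      ≤ (d i)⁻¹ * ∑ j, τ j * (‖F (Pi.single i 1) j‖ * ‖u j‖) := by
    rw [hGi, norm_mul, norm_inv, Complex.norm_real, Real.norm_eq_abs, abs_of_pos (hd i)]
    exact mul_le_mul_of_nonneg_left hSabs (inv_nonneg.mpr (hd i).le)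
  have hFδ : ∀ j, ‖F (Pi.single i 1) j‖ ≤ d i := fun j =>
    (abs_le_inorm _ j).trans ((hF1 _).trans_eq (wnorm_single d i))
  have h2 : ∑ j, τ j * (‖F (Pi.single i 1) j‖ * ‖u j‖)
      ≤ ∑ j, τ j * (d i * ‖u j‖) := by
    refine Finset.sum_le_sum fun j _ => ?_
    exact mul_le_mul_of_nonneg_left
      (mul_le_mul_of_nonneg_right (hFδ j) (norm_nonneg _)) (hτ j).le
  calc ‖G u i‖
      ≤ (d i)⁻¹ * ∑ j, τ j * (d i * ‖u j‖) :=
        habs.trans (mul_le_mul_of_nonneg_left h2 (inv_nonneg.mpr (hd i).le))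
    _ = ∑ j, τ j * ‖u j‖ := by
        rw [Finset.mul_sum]
        refine Finset.sum_congr rfl fun j _ => ?_
        rw [show τ j * (d i * ‖u j‖) = d i * (τ j * ‖u j‖) by ring,
          inv_mul_cancel_left₀ (hd i).ne']

/-- Quantum Donoho-Stark uncertainty principle, commutative finite-dimensional case. -/
theorem quantum_donoho_stark {n m : ℕ} (hn : 0 < n) (hm : 0 < m)
    (d : Fin n → ℝ) (τ : Fin m → ℝ) (hd : ∀ i, 0 < d i) (hτ : ∀ j, 0 < τ j)
    (k : ℝ) (hk : 0 < k)
    (F : (Fin n → ℂ) →ₗ[ℂ] (Fin m → ℂ)) (G : (Fin m → ℂ) →ₗ[ℂ] (Fin n → ℂ))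
    (hadj : IsAdjointPair d τ F G)
    (hF1 : ∀ x, inorm (F x) ≤ wnorm d 1 x)
    (hFk : ∀ x, k * inorm x ≤ inorm (G (F x)))
    (x : Fin n → ℂ) (hx : x ≠ 0) :
    wsupp d x * wsupp τ (F x) ≥ k := by
  obtain ⟨i0, hi0⟩ : ∃ i, x i ≠ 0 := by
    by_contra h; push_neg at h; exact hx (funext h)
  have hM : 0 < inorm x :=
    lt_of_lt_of_le (norm_pos_iff.mpr hi0) (abs_le_inorm x i0)
  have h1 : k * inorm x ≤ inorm (G (F x)) := hFk x
  have h2 : inorm (G (F x)) ≤ ∑ j, τ j * ‖F x j‖ :=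
    inorm_G_le d τ hd hτ F G hadj hF1 (F x)
  have h3 : ∑ j, τ j * ‖F x j‖ ≤ wsupp τ (F x) * inorm (F x) :=
    sum_abs_le τ hτ (F x)
  have h4 : inorm (F x) ≤ wsupp d x * inorm x :=
    ((hF1 x).trans_eq (wnorm_one d x)).trans (sum_abs_le d hd x)
  have h5 : 0 ≤ wsupp τ (F x) := wsupp_nonneg τ hτ (F x)
  have hchain : k * inorm x ≤ wsupp τ (F x) * (wsupp d x * inorm x) :=
    ((h1.trans h2).trans h3).trans (mul_le_mul_of_nonneg_left h4 h5)
  have : k ≤ wsupp τ (F x) * wsupp d x := by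
    rw [show wsupp τ (F x) * (wsupp d x * inorm x)
        = (wsupp τ (F x) * wsupp d x) * inorm x by ring] at hchain
    exact le_of_mul_le_mul_right hchain hM
  linarith [this]
end

section
/- Continuity of the smooth support in ε, commutative finite-dimensional case: for every nonzero x : Fin n → ℂ, every real 1 ≤ p < ∞, every ε ∈ [0,1] and every c with 0 < c < 1, one has S_ε^{p,d}(x) ≤ S_{cε}^{p,d}(x) ≤ (1 − c) * S_d(x) + c * S_ε^{p,d}(x). In particular S_{cε}^{p,d}(x) → S_ε^{p,d}(x) as c → 1⁻. -/
open Finset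

/-- The `(p, ε)` smooth support of `x` with respect to the weight `d`. -/
noncomputable def smoothSupp {n : ℕ} (d : Fin n → ℝ) (p ε : ℝ) (x : Fin n → ℂ) : ℝ :=
  sInf { s : ℝ | ∃ h : Fin n → ℝ, (∀ i, 0 ≤ h i) ∧ (∀ i, h i ≤ 1) ∧
    wnorm d p (fun i => ((1 - h i : ℝ) : ℂ) * x i) ≤ ε * wnorm d p x ∧
    s = ∑ i, if x i = 0 then 0 else d i * h i }

lemma wnorm_nonneg {n : ℕ} (d : Fin n → ℝ) (hd : ∀ i, 0 < d i) (p : ℝ) (x : Fin n → ℂ) :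
    0 ≤ wnorm d p x :=
  Real.rpow_nonneg (Finset.sum_nonneg fun i _ =>
    mul_nonneg (hd i).le (Real.rpow_nonneg (norm_nonneg _) p)) _

lemma wnorm_smul {n : ℕ} (d : Fin n → ℝ) (hd : ∀ i, 0 < d i) (p : ℝ) (hp : 0 < p)
    (c : ℝ) (hc : 0 ≤ c) (y : Fin n → ℂ) :
    wnorm d p (fun i => (c : ℂ) * y i) = c * wnorm d p y := by
  unfold wnorm
  have h1 : ∀ i, d i * ‖(c:ℂ) * y i‖ ^ p
      = c ^ p * (d i * ‖y i‖ ^ p) := by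
    intro i
    rw [norm_mul, Complex.norm_real, Real.norm_eq_abs, abs_of_nonneg hc,
      Real.mul_rpow hc (norm_nonneg _)]
    ring
  simp_rw [h1, ← Finset.mul_sum]
  rw [Real.mul_rpow (Real.rpow_nonneg hc p) (Finset.sum_nonneg fun i _ =>
    mul_nonneg (hd i).le (Real.rpow_nonneg (norm_nonneg _) p))]
  rw [← Real.rpow_mul hc, mul_one_div_cancel hp.ne', Real.rpow_one]


/-- Continuity of the smooth support in `ε`, commutative finite-dimensional case. -/
theorem smooth_support_continuity {n : ℕ} (hn : 0 < n)
    (d : Fin n → ℝ) (hd : ∀ i, 0 < d i)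
    (x : Fin n → ℂ) (hx : x ≠ 0) (p ε : ℝ) (hp : 1 ≤ p) (hε : ε ∈ Set.Icc (0:ℝ) 1) :
    (∀ c : ℝ, 0 < c → c < 1 →
      smoothSupp d p ε x ≤ smoothSupp d p (c * ε) x ∧
      smoothSupp d p (c * ε) x ≤ (1 - c) * wsupp d x + c * smoothSupp d p ε x) ∧
    Filter.Tendsto (fun c : ℝ => smoothSupp d p (c * ε) x)
      (nhdsWithin 1 (Set.Iio 1)) (nhds (smoothSupp d p ε x)) := by
  obtain ⟨hε0, hε1⟩ := hε
  have hp0 : (0:ℝ) < p := lt_of_lt_of_le one_pos hp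
  have hxn : 0 ≤ wnorm d p x := wnorm_nonneg d hd p x
  -- the defining sets
  set S : ℝ → Set ℝ := fun δ => { s : ℝ | ∃ h : Fin n → ℝ, (∀ i, 0 ≤ h i) ∧ (∀ i, h i ≤ 1) ∧
    wnorm d p (fun i => ((1 - h i : ℝ) : ℂ) * x i) ≤ δ * wnorm d p x ∧
    s = ∑ i, if x i = 0 then 0 else d i * h i } with hS
  have hsm : ∀ δ, smoothSupp d p δ x = sInf (S δ) := fun δ => rfl
  have hbdd : ∀ δ, BddBelow (S δ) := by
    intro δ
    refine ⟨0, fun s hs => ?_⟩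
    obtain ⟨h, h0, h1, _, rfl⟩ := hs
    refine Finset.sum_nonneg fun i _ => ?_
    split_ifs
    · exact le_refl 0
    · exact mul_nonneg (hd i).le (h0 i)
  have hzero : wnorm d p (fun i => ((1 - (1:ℝ) : ℝ) : ℂ) * x i) = 0 := by
    have : (fun i => ((1 - (1:ℝ) : ℝ) : ℂ) * x i) = fun _ => (0:ℂ) := by
      funext i; norm_num
    rw [this]
    simp [wnorm, Real.zero_rpow hp0.ne', Real.zero_rpow (one_div_ne_zero hp0.ne'), Real.zero_rpow (inv_ne_zero hp0.ne')]
  have hne : ∀ δ, 0 ≤ δ → (S δ).Nonempty := by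
    intro δ hδ
    exact ⟨_, fun _ => 1, fun i => zero_le_one, fun i => le_refl 1,
      by rw [hzero]; exact mul_nonneg hδ hxn, rfl⟩
  -- the main inequalities
  have main : ∀ c : ℝ, 0 < c → c < 1 →
      smoothSupp d p ε x ≤ smoothSupp d p (c * ε) x ∧
      smoothSupp d p (c * ε) x ≤ (1 - c) * wsupp d x + c * smoothSupp d p ε x := by
    intro c hc0 hc1
    have hcε : 0 ≤ c * ε := mul_nonneg hc0.le hε0
    constructor
    · rw [hsm, hsm]
      refine csInf_le_csInf (hbdd ε) (hne _ hcε) ?_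
      rintro s ⟨h, h0, h1, hw, rfl⟩
      refine ⟨h, h0, h1, hw.trans ?_, rfl⟩
      exact mul_le_mul_of_nonneg_right (by nlinarith) hxn
    · -- for each s ∈ S ε, the shifted h' gives an element of S (c*ε)
      have step : ∀ s ∈ S ε, smoothSupp d p (c * ε) x ≤ (1 - c) * wsupp d x + c * s := by
        rintro s ⟨h, h0, h1, hw, rfl⟩
        set h' : Fin n → ℝ := fun i => 1 - c * (1 - h i) with hh'
        have mem : (1 - c) * wsupp d x + c * (∑ i, if x i = 0 then 0 else d i * h i) ∈
            S (c * ε) := by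
          refine ⟨h', fun i => ?_, fun i => ?_, ?_, ?_⟩
          · have h2 := mul_le_of_le_one_left (sub_nonneg.2 (h1 i)) hc1.le
            have := h0 i; simp only [hh']; linarith
          · have h2 := mul_nonneg hc0.le (sub_nonneg.2 (h1 i))
            simp only [hh']; linarith
          · have heq : (fun i => ((1 - h' i : ℝ) : ℂ) * x i)
                = fun i => (c : ℂ) * (((1 - h i : ℝ) : ℂ) * x i) := by
              funext i; simp only [hh']; push_cast; ring
            rw [heq, wnorm_smul d hd p hp0 c hc0.le]
            calc c * wnorm d p (fun i => ((1 - h i : ℝ) : ℂ) * x i)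
                ≤ c * (ε * wnorm d p x) := by
                  exact mul_le_mul_of_nonneg_left hw hc0.le
              _ = c * ε * wnorm d p x := by ring
          · rw [wsupp, Finset.mul_sum, Finset.mul_sum, ← Finset.sum_add_distrib]
            refine Finset.sum_congr rfl fun i _ => ?_
            split_ifs
            · ring
            · simp only [hh']; ring
        exact csInf_le (hbdd _) mem
      have hdiv : (smoothSupp d p (c * ε) x - (1 - c) * wsupp d x) / c ≤ sInf (S ε) := by
        refine le_csInf (hne ε hε0) fun s hs => ?_
        rw [div_le_iff₀ hc0]
        have := step s hs
        linarith
      rw [hsm ε]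
      rw [div_le_iff₀ hc0] at hdiv
      linarith
  refine ⟨main, ?_⟩
  have hmem : Set.Ioo (0:ℝ) 1 ∈ nhdsWithin (1:ℝ) (Set.Iio 1) :=
    Ioo_mem_nhdsLT_of_mem (by constructor <;> norm_num)
  have hup : Filter.Tendsto (fun c : ℝ => (1 - c) * wsupp d x + c * smoothSupp d p ε x)
      (nhdsWithin 1 (Set.Iio 1)) (nhds (smoothSupp d p ε x)) := by
    have hcont : Continuous fun c : ℝ => (1 - c) * wsupp d x + c * smoothSupp d p ε x := by
      continuity
    have h2 : Filter.Tendsto (fun c : ℝ => (1 - c) * wsupp d x + c * smoothSupp d p ε x)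
        (nhdsWithin 1 (Set.Iio 1)) (nhds ((1 - 1) * wsupp d x + 1 * smoothSupp d p ε x)) :=
      (hcont.tendsto 1).mono_left nhdsWithin_le_nhds
    simpa using h2
  refine tendsto_of_tendsto_of_tendsto_of_le_of_le' tendsto_const_nhds hup ?_ ?_
  · filter_upwards [hmem] with c hc
    exact (main c hc.1 hc.2).1
  · filter_upwards [hmem] with c hc
    exact (main c hc.1 hc.2).2
end
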